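/- If ζ is a primitive k-th root of unity with k odd, ℓ ≥ 0, 0 ≤ j ≤ ℓ, and 2N ≥ (2ℓ+1)k+1, then the j-th derivative (d/dq)^j (q;q²)_N evaluated at q = ζ is zero. -/
import Mathlib


open Polynomial Finset

lemma aux_iter_deriv (n : ℕ) : ∀ (P : ℂ[X]) (a : ℂ),
    (X - C a) ^ (n + 1) ∣ P → (derivative^[n] P).eval a = 0 := by
  induction n with
  | zero =>
    rintro P a ⟨Q, rfl⟩
    simp
  | succ n ih =>
    rintro P a ⟨Q, rfl⟩
    rw [Function.iterate_succ_apply]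
    apply ih
    rw [derivative_mul, derivative_pow]
    refine dvd_add ⟨C ((n : ℂ) + 2) * derivative (X - C a) * Q, ?_⟩
      ⟨(X - C a) * derivative Q, ?_⟩
    · push_cast
      ring_nf
    · ring

theorem deriv_odd_pochhammer_eval_primitiveRoot (k ℓ j N : ℕ) (ζ : ℂ)
    (hζ : IsPrimitiveRoot ζ k) (hodd : Odd k) (hj : j ≤ ℓ)
    (hN : (2 * ℓ + 1) * k + 1 ≤ 2 * N) :
    (derivative^[j] (∏ m ∈ Finset.range N, (1 - X ^ (2 * m + 1) : ℂ[X]))).eval ζ = 0 := by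
  obtain ⟨c, hc⟩ := hodd
  subst hc
  apply aux_iter_deriv
  have hdvd : (X - C ζ) ^ (ℓ + 1) ∣ ∏ m ∈ Finset.range N, (1 - X ^ (2 * m + 1) : ℂ[X]) := by
    set f : ℕ → ℕ := fun t => c + t * (2 * c + 1) with hf
    have hfinj : Set.InjOn f (range (ℓ + 1)) := by
      intro a _ b _ hab
      simp only [hf, add_right_inj] at hab
      exact Nat.eq_of_mul_eq_mul_right (by omega) hab
    have hfsub : (range (ℓ + 1)).image f ⊆ range N := by
      intro x hx
      obtain ⟨t, ht, rfl⟩ := Finset.mem_image.mp hx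
      simp only [Finset.mem_range, hf] at ht ⊢
      have h1 : (2 * t + 1) * (2 * c + 1) ≤ (2 * ℓ + 1) * (2 * c + 1) :=
        Nat.mul_le_mul_right _ (by omega)
      nlinarith
    calc (X - C ζ) ^ (ℓ + 1)
        = ∏ m ∈ (range (ℓ + 1)).image f, (X - C ζ) := by
          rw [Finset.prod_const, Finset.card_image_of_injOn hfinj, Finset.card_range]
      _ ∣ ∏ m ∈ (range (ℓ + 1)).image f, (1 - X ^ (2 * m + 1) : ℂ[X]) := by
          apply Finset.prod_dvd_prod_of_dvd
          intro m hm
          rw [dvd_iff_isRoot]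
          obtain ⟨t, ht, rfl⟩ := Finset.mem_image.mp hm
          have hexp : 2 * f t + 1 = (2 * c + 1) * (2 * t + 1) := by
            simp only [hf]; ring
          simp only [IsRoot, eval_sub, eval_one, eval_pow, eval_X, hexp, pow_mul,
            hζ.pow_eq_one, one_pow, sub_self]
      _ ∣ ∏ m ∈ range N, (1 - X ^ (2 * m + 1) : ℂ[X]) :=
          Finset.prod_dvd_prod_of_subset _ _ _ hfsub
  exact (pow_dvd_pow _ (by omega)).trans hdvd
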